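/- Let q ≥ 0. There exists a constant C > 0, independent of r, t, k, m, such that for all r > 0, all 0 < t ≤ r^α, and all k, m > 0 satisfying either k ≥ t^{1/α} or q < α + β, one has ∫_0^t (1 ∧ k/s^{1/α})^q · Φ((k∨s^{1/α})/r) · ℓ((k∨s^{1/α})/m) ds ≤ C·t·(1 ∧ k/t^{1/α})^q · Φ((k∨t^{1/α})/r) · ℓ((k∨t^{1/α})/m). -/

import Mathlib

open Set Metric MeasureTheory Real Filter Topology

noncomputable section

/-- `f` satisfies the lower scaling condition at zero with index `b`. -/
def HasLowerScaling (f : ℝ → ℝ) (b : ℝ) : Prop :=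
  ∃ C : ℝ, 1 ≤ C ∧ ∀ s r : ℝ, 0 < s → s ≤ r → r ≤ 1 → C⁻¹ * (r / s) ^ b ≤ f r / f s

/-- `f` satisfies the upper scaling condition at zero with index `b`. -/
def HasUpperScaling (f : ℝ → ℝ) (b : ℝ) : Prop :=
  ∃ C : ℝ, 1 ≤ C ∧ ∀ s r : ℝ, 0 < s → s ≤ r → r ≤ 1 → f r / f s ≤ C * (r / s) ^ b

/-- The lower Matuszewska index of `f` at zero equals `β`,
i.e. `β` is the supremum of the indices for which the lower scaling condition holds. -/
def LowerIndexIs (f : ℝ → ℝ) (β : ℝ) : Prop :=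
  (∀ b : ℝ, b < β → HasLowerScaling f b) ∧ (∀ b : ℝ, β < b → ¬ HasLowerScaling f b)

/-- The upper Matuszewska index of `f` at zero equals `β`,
i.e. `β` is the infimum of the indices for which the upper scaling condition holds. -/
def UpperIndexIs (f : ℝ → ℝ) (β : ℝ) : Prop :=
  (∀ b : ℝ, β < b → HasUpperScaling f b) ∧ (∀ b : ℝ, b < β → ¬ HasUpperScaling f b)

/-- `f` is almost increasing on `(0,1]`. -/
def AlmostIncreasingOn01 (f : ℝ → ℝ) : Prop :=
  ∃ C : ℝ, 1 ≤ C ∧ ∀ s r : ℝ, 0 < s → s ≤ r → r ≤ 1 → f s ≤ C * f r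

/-- `f` is almost decreasing on `(0,1]`. -/
def AlmostDecreasingOn01 (f : ℝ → ℝ) : Prop :=
  ∃ C : ℝ, 1 ≤ C ∧ ∀ s r : ℝ, 0 < s → s ≤ r → r ≤ 1 → f r ≤ C * f s

/-- A positive Borel function on `(0,∞)`, equal to `1` on `[1,∞)`. -/
def StdFun (f : ℝ → ℝ) : Prop :=
  Measurable f ∧ (∀ r : ℝ, 0 < r → 0 < f r) ∧ (∀ r : ℝ, 1 ≤ r → f r = 1)

/-- The scaling condition for the slowly varying factor `ℓ`, with parameters `β₁, β₂`. -/
def EllScaling (l : ℝ → ℝ) (β₁ β₂ : ℝ) : Prop :=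
  ∀ ε : ℝ, 0 < ε → ∃ C : ℝ, 1 ≤ C ∧ ∀ s r : ℝ, 0 < s → s ≤ r → r ≤ 1 →
    C⁻¹ * (r / s) ^ (-(min ε β₁)) ≤ l r / l s ∧ l r / l s ≤ C * (r / s) ^ (min ε β₂)

/-- `l` has both Matuszewska indices at zero equal to `0`. -/
def SlowlyVaryingScaling (l : ℝ → ℝ) : Prop :=
  ∀ ε : ℝ, 0 < ε → ∃ C : ℝ, 1 ≤ C ∧ ∀ s r : ℝ, 0 < s → s ≤ r → r ≤ 1 →
    C⁻¹ * (r / s) ^ (-ε) ≤ l r / l s ∧ l r / l s ≤ C * (r / s) ^ ε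

/-- The distance to the boundary of `D`. -/
def dd {d : ℕ} (D : Set (EuclideanSpace ℝ (Fin d))) (x : EuclideanSpace ℝ (Fin d)) : ℝ :=
  Metric.infDist x (frontier D)

/-- The function `A_{f,g,h}(t,x,y)`. -/
def Afun {d : ℕ} (α : ℝ) (D : Set (EuclideanSpace ℝ (Fin d))) (f g h : ℝ → ℝ)
    (t : ℝ) (x y : EuclideanSpace ℝ (Fin d)) : ℝ :=
  f (max (min (dd D x) (dd D y)) (t ^ (1 / α)) / dist x y) *
  g (max (max (dd D x) (dd D y)) (t ^ (1 / α)) / dist x y) *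
  h (max (min (dd D x) (dd D y)) (t ^ (1 / α)) /
      min (max (max (dd D x) (dd D y)) (t ^ (1 / α))) (dist x y))

/-- The inward unit vector `𝐧ₓ = (x - Qₓ)/δ_D(x)`. -/
def nv {d : ℕ} (D : Set (EuclideanSpace ℝ (Fin d)))
    (Q : EuclideanSpace ℝ (Fin d) → EuclideanSpace ℝ (Fin d))
    (x : EuclideanSpace ℝ (Fin d)) : EuclideanSpace ℝ (Fin d) :=
  (dd D x)⁻¹ • (x - Q x)

/-- `∫_a^b A_{f,g,h}(t,x,x+u𝐧ₓ) A_{f,g,h}(t,x+u𝐧ₓ,y) u^{-α-1} du`. -/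
def Iint {d : ℕ} (α : ℝ) (D : Set (EuclideanSpace ℝ (Fin d)))
    (Q : EuclideanSpace ℝ (Fin d) → EuclideanSpace ℝ (Fin d))
    (f g h : ℝ → ℝ) (a b t : ℝ) (x y : EuclideanSpace ℝ (Fin d)) : ℝ :=
  ∫ u in Set.Ioo a b,
    Afun α D f g h t x (x + u • nv D Q x) * Afun α D f g h t (x + u • nv D Q x) y *
      u ^ (-α - 1)

/-- `∫_a^b f₀(k₂/u) f₂(u/rr) l(k₁/u) u^{-α-1} du`. -/
def Jint (α : ℝ) (f₀ f₂ l : ℝ → ℝ) (a b rr k₁ k₂ : ℝ) : ℝ :=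
  ∫ u in Set.Ioo a b, f₀ (k₂ / u) * f₂ (u / rr) * l (k₁ / u) * u ^ (-α - 1)

lemma aux_div {A B x c : ℝ} (hA : 0 < A) (hx : 0 < x) (hc : 0 < c)
    (h : c⁻¹ * x ≤ B / A) : A ≤ c * x⁻¹ * B := by
  have h1 : c⁻¹ * x * A ≤ B := (le_div_iff₀ hA).mp h
  have h2 : A = c * x⁻¹ * (c⁻¹ * x * A) := by field_simp
  rw [h2]
  exact mul_le_mul_of_nonneg_left h1 (by positivity)

lemma int_rpow_Ioo {t p : ℝ} (ht : 0 < t) (hp : -1 < p) :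
    ∫ s in Set.Ioo (0:ℝ) t, s ^ p = t ^ (p+1) / (p+1) := by
  rw [← MeasureTheory.integral_Ioc_eq_integral_Ioo,
    ← intervalIntegral.integral_of_le ht.le, integral_rpow (Or.inl hp),
    Real.zero_rpow (by linarith)]
  ring

lemma integrableOn_rpow_Ioo {t p : ℝ} (ht : 0 < t) (hp : -1 < p) :
    MeasureTheory.IntegrableOn (fun s : ℝ => s ^ p) (Set.Ioo 0 t) := by
  have := intervalIntegral.intervalIntegrable_rpow' (a := 0) (b := t) hp
  rw [intervalIntegrable_iff_integrableOn_Ioc_of_le ht.le] at this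
  exact this.mono_set Set.Ioo_subset_Ioc_self

lemma ell_bound (l : ℝ → ℝ) (hl : StdFun l) {Cl ε : ℝ} (hCl : 1 ≤ Cl) (hε : 0 < ε)
    (hsc : ∀ s r : ℝ, 0 < s → s ≤ r → r ≤ 1 →
      Cl⁻¹ * (r / s) ^ (-ε) ≤ l r / l s ∧ l r / l s ≤ Cl * (r / s) ^ ε)
    {u T m : ℝ} (hu : 0 < u) (huT : u ≤ T) (hm : 0 < m) :
    l (u / m) ≤ Cl * (T / u) ^ ε * l (T / m) := by
  have hT : 0 < T := lt_of_lt_of_le hu huT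
  have hx : 0 < u / m := by positivity
  have hxy : u / m ≤ T / m := by gcongr
  have hTu : 1 ≤ T / u := (one_le_div hu).2 huT
  have hTue : 1 ≤ (T / u) ^ ε := Real.one_le_rpow hTu hε.le
  rcases le_or_gt 1 (u / m) with h1 | h1
  · rw [hl.2.2 _ h1, hl.2.2 _ (le_trans h1 hxy)]
    nlinarith
  · rcases le_or_gt 1 (T / m) with h2 | h2
    · rw [hl.2.2 _ h2]
      have hmT : m ≤ T := by
        rw [le_div_iff₀ hm] at h2; linarith
      have := (hsc (u / m) 1 hx h1.le le_rfl).1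
      rw [hl.2.2 1 le_rfl] at this
      have key : l (u / m) ≤ Cl * ((1 / (u / m)) ^ (-ε))⁻¹ * 1 :=
        aux_div (hl.2.1 _ hx) (Real.rpow_pos_of_pos (by positivity) _) (by linarith) this
      have heq : ((1 / (u / m)) ^ (-ε))⁻¹ = (m / u) ^ ε := by
        rw [Real.rpow_neg (by positivity), inv_inv, one_div, inv_div]
      rw [heq, mul_one] at key
      have hle : (m / u) ^ ε ≤ (T / u) ^ ε :=
        Real.rpow_le_rpow (by positivity) (by gcongr) hε.le
      calc l (u / m) ≤ Cl * (m / u) ^ ε := key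
        _ ≤ Cl * (T / u) ^ ε * 1 := by rw [mul_one]; nlinarith
    · have := (hsc (u / m) (T / m) hx hxy h2.le).1
      have heq : (T / m) / (u / m) = T / u := by field_simp
      rw [heq] at this
      have key := aux_div (hl.2.1 _ hx) (Real.rpow_pos_of_pos (by positivity) _)
        (by positivity : (0:ℝ) < Cl) this
      rwa [Real.rpow_neg (by positivity), inv_inv] at key

lemma phi_bound (Φ : ℝ → ℝ) (hΦpos : ∀ r : ℝ, 0 < r → 0 < Φ r) {CΦ b : ℝ} (hC : 1 ≤ CΦ)
    (hsc : ∀ s r : ℝ, 0 < s → s ≤ r → r ≤ 1 → CΦ⁻¹ * (r / s) ^ b ≤ Φ r / Φ s)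
    {u T r : ℝ} (hu : 0 < u) (huT : u ≤ T) (hTr : T ≤ r) :
    Φ (u / r) ≤ CΦ * ((T / u) ^ b)⁻¹ * Φ (T / r) := by
  have hT : 0 < T := lt_of_lt_of_le hu huT
  have hr : 0 < r := lt_of_lt_of_le hT hTr
  have h1 := hsc (u / r) (T / r) (by positivity) (by gcongr) (by
    rw [div_le_one hr]; exact hTr)
  have heq : (T / r) / (u / r) = T / u := by field_simp
  rw [heq] at h1
  exact aux_div (hΦpos _ (by positivity)) (Real.rpow_pos_of_pos (by positivity) _)
    (by positivity) h1

lemma pow_combine {k u T : ℝ} (hk : 0 < k) (hu : 0 < u) (hT : 0 < T) (q b ε : ℝ) :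
    (k / u) ^ q * ((T / u) ^ b)⁻¹ * (T / u) ^ ε = k ^ q * T ^ (ε - b) * u ^ (b - ε - q) := by
  rw [Real.div_rpow hk.le hu.le, Real.div_rpow hT.le hu.le, Real.div_rpow hT.le hu.le,
    Real.rpow_sub hT, show b - ε - q = b - (ε + q) by ring, Real.rpow_sub hu,
    Real.rpow_add hu]
  have h1 : u ^ q ≠ 0 := (Real.rpow_pos_of_pos hu q).ne'
  have h2 : u ^ b ≠ 0 := (Real.rpow_pos_of_pos hu b).ne'
  have h3 : u ^ ε ≠ 0 := (Real.rpow_pos_of_pos hu ε).ne'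
  have h4 : T ^ b ≠ 0 := (Real.rpow_pos_of_pos hT b).ne'
  field_simp

lemma u_pow_bound {s u T : ℝ} {α : ℝ} (hs : 0 < s)
    (h1 : s ^ (1/α) ≤ u) (h2 : u ≤ T) (e : ℝ) :
    u ^ e ≤ s ^ (e / α) + T ^ e := by
  have hu : 0 < u := lt_of_lt_of_le (Real.rpow_pos_of_pos hs _) h1
  have hT : 0 < T := lt_of_lt_of_le hu h2
  rcases le_or_gt e 0 with he | he
  · have h3 := Real.rpow_le_rpow_of_nonpos (Real.rpow_pos_of_pos hs (1/α)) h1 he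
    have heq : (s ^ (1/α)) ^ e = s ^ (e / α) := by
      rw [← Real.rpow_mul hs.le]; ring_nf
    rw [heq] at h3
    nlinarith [Real.rpow_pos_of_pos hT e]
  · have h3 : u ^ e ≤ T ^ e := Real.rpow_le_rpow hu.le h2 he.le
    nlinarith [Real.rpow_pos_of_pos hs (e/α)]

lemma case1_lemma {α : ℝ} (hα0 : 0 < α) (Φ l : ℝ → ℝ) (hΦ : StdFun Φ) (hl : StdFun l)
    {q C : ℝ} (hC : 1 ≤ C) {r t k m : ℝ}
    (hr : 0 < r) (ht : 0 < t) (hk : 0 < k) (hm : 0 < m)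
    (hTk : t ^ (1 / α) ≤ k) :
    (∫ s in Set.Ioo (0 : ℝ) t,
        min 1 (k / s ^ (1 / α)) ^ q * Φ (max k (s ^ (1 / α)) / r) *
          l (max k (s ^ (1 / α)) / m))
      ≤ C * t * min 1 (k / t ^ (1 / α)) ^ q * Φ (max k (t ^ (1 / α)) / r) *
          l (max k (t ^ (1 / α)) / m) := by
  have hT : 0 < t ^ (1 / α) := Real.rpow_pos_of_pos ht _
  have hmax : max k (t ^ (1 / α)) = k := max_eq_left hTk
  have hmin : min 1 (k / t ^ (1 / α)) = 1 := min_eq_left ((one_le_div hT).2 hTk)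
  have hconst : Set.EqOn
      (fun s : ℝ => min 1 (k / s ^ (1 / α)) ^ q * Φ (max k (s ^ (1 / α)) / r) *
        l (max k (s ^ (1 / α)) / m))
      (fun _ : ℝ => Φ (k / r) * l (k / m)) (Set.Ioo 0 t) := by
    intro s hs
    have hs0 : 0 < s := hs.1
    have hsk : s ^ (1 / α) ≤ k :=
      le_trans (Real.rpow_le_rpow hs0.le hs.2.le (by positivity)) hTk
    have h1 : max k (s ^ (1 / α)) = k := max_eq_left hsk
    have h2 : min 1 (k / s ^ (1 / α)) = 1 :=
      min_eq_left ((one_le_div (Real.rpow_pos_of_pos hs0 _)).2 hsk)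
    simp only [h1, h2, Real.one_rpow, one_mul]
  rw [MeasureTheory.setIntegral_congr_fun measurableSet_Ioo hconst,
    MeasureTheory.setIntegral_const, Real.volume_real_Ioo_of_le ht.le, sub_zero,
    hmax, hmin, Real.one_rpow, smul_eq_mul]
  have hΦp := hΦ.2.1 (k / r) (by positivity)
  have hlp := hl.2.1 (k / m) (by positivity)
  nlinarith [mul_pos (mul_pos ht hΦp) hlp]

/-- Lemma 8.2, inequality for `ℓ((k∨s^{1/α})/m)`. -/
theorem statement_13
    (α β βs : ℝ) (hα0 : 0 < α) (hα2 : α < 2) (hβ : 0 ≤ β) (hβs : β ≤ βs)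
    (Φ l : ℝ → ℝ)
    (hΦ : StdFun Φ) (hΦinc : AlmostIncreasingOn01 Φ)
    (hΦlow : LowerIndexIs Φ β) (hΦup : UpperIndexIs Φ βs)
    (hl : StdFun l) (hlscale : SlowlyVaryingScaling l)
    (q : ℝ) (hq : 0 ≤ q) :
    ∃ C : ℝ, 0 < C ∧
      ∀ r t k m : ℝ, 0 < r → 0 < t → t ≤ r ^ α → 0 < k → 0 < m →
        (t ^ (1 / α) ≤ k ∨ q < α + β) →
        (∫ s in Set.Ioo (0 : ℝ) t,
            min 1 (k / s ^ (1 / α)) ^ q * Φ (max k (s ^ (1 / α)) / r) *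
              l (max k (s ^ (1 / α)) / m))
          ≤ C * t * min 1 (k / t ^ (1 / α)) ^ q * Φ (max k (t ^ (1 / α)) / r) *
              l (max k (t ^ (1 / α)) / m) := by
  by_cases hcase : q < α + β
  case neg =>
    refine ⟨1, one_pos, fun r t k m hr ht htr hk hm hdisj => ?_⟩
    exact case1_lemma hα0 Φ l hΦ hl le_rfl hr ht hk hm (hdisj.resolve_right hcase)
  case pos =>
    set ε : ℝ := (α + β - q) / 4 with hεdef
    have hε : 0 < ε := by rw [hεdef]; linarith
    set b : ℝ := q - α + 2 * ε with hbdef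
    have hbβ : b < β := by rw [hbdef, hεdef]; linarith
    obtain ⟨CΦ, hCΦ1, hCΦ⟩ := hΦlow.1 b hbβ
    obtain ⟨Cl, hCl1, hCl⟩ := hlscale ε hε
    set C₂ : ℝ := CΦ * Cl * (α / ε + 1) with hC2def
    have hC2pos : 0 < C₂ := by
      have : 0 < α / ε + 1 := by positivity
      rw [hC2def]; positivity
    refine ⟨max 1 C₂, lt_of_lt_of_le one_pos (le_max_left _ _), ?_⟩
    intro r t k m hr ht htr hk hm _
    rcases le_or_gt (t ^ (1 / α)) k with hTk | hkT
    · exact case1_lemma hα0 Φ l hΦ hl (le_max_left _ _) hr ht hk hm hTk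
    -- main case : k < t^(1/α)
    set T : ℝ := t ^ (1 / α) with hTdef
    have hT : 0 < T := Real.rpow_pos_of_pos ht _
    have hTr : T ≤ r := by
      have h1 : t ^ (1/α) ≤ (r ^ α) ^ (1/α) :=
        Real.rpow_le_rpow ht.le htr (by positivity)
      rwa [← Real.rpow_mul hr.le, mul_one_div_cancel hα0.ne', Real.rpow_one] at h1
    have hΦT : 0 < Φ (T / r) := hΦ.2.1 _ (by positivity)
    have hlT : 0 < l (T / m) := hl.2.1 _ (by positivity)
    set p : ℝ := (ε - α) / α with hpdef
    have hp1 : p + 1 = ε / α := by rw [hpdef]; field_simp; ring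
    have hp : -1 < p := by
      have : 0 < ε / α := by positivity
      linarith [hp1]
    set K : ℝ := CΦ * Cl * Φ (T / r) * l (T / m) * k ^ q * T ^ (ε - b) with hKdef
    have hK : 0 < K := by
      rw [hKdef]
      have h1 : 0 < k ^ q := Real.rpow_pos_of_pos hk q
      have h2 : 0 < T ^ (ε - b) := Real.rpow_pos_of_pos hT _
      positivity
    have hbound : ∀ s ∈ Set.Ioo (0:ℝ) t,
        min 1 (k / s ^ (1 / α)) ^ q * Φ (max k (s ^ (1 / α)) / r) *
          l (max k (s ^ (1 / α)) / m) ≤ K * (s ^ p + T ^ (ε - α)) := by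
      intro s hs
      have hs0 : 0 < s := hs.1
      set u : ℝ := max k (s ^ (1/α)) with hudef
      have hsp : 0 < s ^ (1/α) := Real.rpow_pos_of_pos hs0 _
      have hu : 0 < u := lt_of_lt_of_le hk (le_max_left _ _)
      have hsu : s ^ (1/α) ≤ u := le_max_right _ _
      have hsT : s ^ (1/α) ≤ T := Real.rpow_le_rpow hs0.le hs.2.le (by positivity)
      have huT : u ≤ T := max_le hkT.le hsT
      have hminu : min 1 (k / s ^ (1/α)) = k / u := by
        rcases le_total (s ^ (1/α)) k with h | h
        · rw [hudef, max_eq_left h, div_self hk.ne']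
          exact min_eq_left ((one_le_div hsp).2 h)
        · rw [hudef, max_eq_right h]
          exact min_eq_right ((div_le_one hsp).2 h)
      rw [hminu]
      have hΦb := phi_bound Φ hΦ.2.1 hCΦ1 hCΦ hu huT hTr
      have hlb := ell_bound l hl hCl1 hε hCl hu huT hm
      have hΦu : 0 < Φ (u / r) := hΦ.2.1 _ (by positivity)
      have hlu : 0 < l (u / m) := hl.2.1 _ (by positivity)
      have hkq : (0:ℝ) ≤ (k / u) ^ q := Real.rpow_nonneg (by positivity) q
      have step1 : (k / u) ^ q * Φ (u / r) * l (u / m)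
          ≤ (CΦ * Cl * Φ (T / r) * l (T / m)) *
            ((k / u) ^ q * ((T / u) ^ b)⁻¹ * (T / u) ^ ε) := by
        have h1 : Φ (u / r) * l (u / m)
            ≤ (CΦ * ((T / u) ^ b)⁻¹ * Φ (T / r)) * (Cl * (T / u) ^ ε * l (T / m)) := by
          apply mul_le_mul hΦb hlb hlu.le
          have hx : 0 < ((T / u) ^ b)⁻¹ := by
            have := Real.rpow_pos_of_pos (div_pos hT hu) b; positivity
          positivity
        calc (k / u) ^ q * Φ (u / r) * l (u / m)
            = (k / u) ^ q * (Φ (u / r) * l (u / m)) := by ring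
          _ ≤ (k / u) ^ q * ((CΦ * ((T / u) ^ b)⁻¹ * Φ (T / r)) *
              (Cl * (T / u) ^ ε * l (T / m))) := mul_le_mul_of_nonneg_left h1 hkq
          _ = (CΦ * Cl * Φ (T / r) * l (T / m)) *
              ((k / u) ^ q * ((T / u) ^ b)⁻¹ * (T / u) ^ ε) := by ring
      rw [pow_combine hk hu hT q b ε] at step1
      have step2 : u ^ (b - ε - q) ≤ s ^ p + T ^ (ε - α) := by
        have he : b - ε - q = ε - α := by rw [hbdef]; ring
        have hpe : p = (ε - α) / α := hpdef
        rw [he, hpe]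
        exact u_pow_bound hs0 hsu huT (ε - α)
      calc (k / u) ^ q * Φ (u / r) * l (u / m)
          ≤ (CΦ * Cl * Φ (T / r) * l (T / m)) * (k ^ q * T ^ (ε - b) * u ^ (b - ε - q)) :=
            step1
        _ = K * u ^ (b - ε - q) := by rw [hKdef]; ring
        _ ≤ K * (s ^ p + T ^ (ε - α)) := mul_le_mul_of_nonneg_left step2 hK.le
    -- integrability
    have hinth : MeasureTheory.IntegrableOn
        (fun s : ℝ => K * (s ^ p + T ^ (ε - α))) (Set.Ioo 0 t) := by
      apply MeasureTheory.Integrable.const_mul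
      exact (integrableOn_rpow_Ioo ht hp).add
        (MeasureTheory.integrableOn_const
          (by rw [Real.volume_Ioo]; exact ENNReal.ofReal_ne_top))
    have hmeasg : Measurable (fun s : ℝ =>
        min 1 (k / s ^ (1 / α)) ^ q * Φ (max k (s ^ (1 / α)) / r) *
          l (max k (s ^ (1 / α)) / m)) := by
      have h1 : Measurable fun s : ℝ => s ^ (1/α) :=
        (Real.continuous_rpow_const (by positivity)).measurable
      have h2 : Measurable fun x : ℝ => x ^ q :=
        (Real.continuous_rpow_const hq).measurable
      exact ((h2.comp (measurable_const.min (measurable_const.div h1))).mul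
        (hΦ.1.comp ((measurable_const.max h1).div_const r))).mul
        (hl.1.comp ((measurable_const.max h1).div_const m))
    have hintg : MeasureTheory.IntegrableOn (fun s : ℝ =>
        min 1 (k / s ^ (1 / α)) ^ q * Φ (max k (s ^ (1 / α)) / r) *
          l (max k (s ^ (1 / α)) / m)) (Set.Ioo 0 t) := by
      apply MeasureTheory.Integrable.mono' hinth hmeasg.aestronglyMeasurable
      rw [MeasureTheory.ae_restrict_iff' measurableSet_Ioo]
      refine MeasureTheory.ae_of_all _ (fun s hs => ?_)
      have hs0 : 0 < s := hs.1
      have hsp : 0 < s ^ (1/α) := Real.rpow_pos_of_pos hs0 _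
      have hge : (0:ℝ) ≤ min 1 (k / s ^ (1 / α)) ^ q * Φ (max k (s ^ (1 / α)) / r) *
          l (max k (s ^ (1 / α)) / m) := by
        have hmn : (0:ℝ) ≤ min 1 (k / s ^ (1/α)) := le_min one_pos.le (by positivity)
        have := hΦ.2.1 (max k (s ^ (1 / α)) / r) (by positivity)
        have := hl.2.1 (max k (s ^ (1 / α)) / m) (by positivity)
        have := Real.rpow_nonneg hmn q
        positivity
      rw [Real.norm_eq_abs, abs_of_nonneg hge]
      exact hbound s hs
    -- main chain
    have hTα : T ^ α = t := by
      rw [hTdef, ← Real.rpow_mul ht.le, one_div_mul_cancel hα0.ne', Real.rpow_one]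
    have htp : t ^ (p + 1) = t * T ^ (ε - α) := by
      rw [hp1, show ε / α = (1/α) * ε by ring, Real.rpow_mul ht.le, ← hTdef,
        ← hTα, ← Real.rpow_add hT, show α + (ε - α) = ε by ring]
    have hintval : ∫ s in Set.Ioo (0:ℝ) t, K * (s ^ p + T ^ (ε - α))
        = K * (t * T ^ (ε - α) * (α / ε) + t * T ^ (ε - α)) := by
      rw [MeasureTheory.integral_const_mul]
      congr 1
      rw [MeasureTheory.integral_add (integrableOn_rpow_Ioo ht hp)
        (MeasureTheory.integrableOn_const
          (by rw [Real.volume_Ioo]; exact ENNReal.ofReal_ne_top)),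
        int_rpow_Ioo ht hp, MeasureTheory.setIntegral_const, Real.volume_real_Ioo_of_le ht.le, sub_zero,
        smul_eq_mul, htp, hp1]
      have hεne : ε ≠ 0 := hε.ne'
      have hαne : α ≠ 0 := hα0.ne'
      field_simp
    have hmax : max k T = T := max_eq_right hkT.le
    have hmin : min 1 (k / T) = k / T := min_eq_right ((div_le_one hT).2 hkT.le)
    have hTT : T ^ (ε - b) * T ^ (ε - α) = (T ^ q)⁻¹ := by
      rw [← Real.rpow_add hT, show (ε - b) + (ε - α) = -q by rw [hbdef]; ring,
        Real.rpow_neg hT.le]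
    have hfin : K * (t * T ^ (ε - α) * (α / ε) + t * T ^ (ε - α))
        = C₂ * t * ((k / T) ^ q * (Φ (T / r) * l (T / m))) := by
      rw [hKdef, hC2def, Real.div_rpow hk.le hT.le]
      calc CΦ * Cl * Φ (T / r) * l (T / m) * k ^ q * T ^ (ε - b) *
            (t * T ^ (ε - α) * (α / ε) + t * T ^ (ε - α))
          = (CΦ * Cl * Φ (T / r) * l (T / m) * k ^ q * (t * (α / ε) + t)) *
            (T ^ (ε - b) * T ^ (ε - α)) := by ring
        _ = CΦ * Cl * (α / ε + 1) * t * (k ^ q / T ^ q * (Φ (T / r) * l (T / m))) := by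
            rw [hTT, div_eq_mul_inv]; ring
    calc (∫ s in Set.Ioo (0 : ℝ) t,
            min 1 (k / s ^ (1 / α)) ^ q * Φ (max k (s ^ (1 / α)) / r) *
              l (max k (s ^ (1 / α)) / m))
        ≤ ∫ s in Set.Ioo (0:ℝ) t, K * (s ^ p + T ^ (ε - α)) :=
          MeasureTheory.setIntegral_mono_on hintg hinth measurableSet_Ioo hbound
      _ = C₂ * t * ((k / T) ^ q * (Φ (T / r) * l (T / m))) := by rw [hintval, hfin]
      _ ≤ (max 1 C₂) * t * ((k / T) ^ q * (Φ (T / r) * l (T / m))) := by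
          apply mul_le_mul_of_nonneg_right (mul_le_mul_of_nonneg_right
            (le_max_right _ _) ht.le)
          exact mul_nonneg (Real.rpow_nonneg (by positivity) q)
            (mul_nonneg hΦT.le hlT.le)
      _ = (max 1 C₂) * t * min 1 (k / T) ^ q * Φ (max k T / r) * l (max k T / m) := by
          rw [hmax, hmin]; ring
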